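/- Let (H, λ) be a nondegenerate symmetric bilinear form over ℤ on a finitely generated free abelian group H, with adjoint λ̂ : H → H* injective with finite cokernel T = H*/λ̂(H). Then the rational extension λ⁻¹ on H* induces a well-defined symmetric bilinear form b_λ : T × T → ℚ/ℤ, b_λ(j(x̄), j(ȳ)) = λ⁻¹(x̄, ȳ) mod ℤ, and b_λ is nonsingular. -/

import Mathlib

open Module


/-- a nondegenerate symmetric integral bilinear form `λ` on a finitely
generated free abelian group `H`, with finite cokernel `T = H*/λ̂(H)`, induces a
well-defined nonsingular symmetric bilinear form `b_λ : T × T → ℚ/ℤ`, where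
`b_λ(j φ, j ψ) = ψ(x)/n mod ℤ` whenever `λ̂(x) = n·φ` (this is the rational
inverse form `λ⁻¹` reduced mod ℤ). -/
theorem stmt5 {H : Type*} [AddCommGroup H] [Module ℤ H]
    [Module.Free ℤ H] [Module.Finite ℤ H]
    (lam : H →ₗ[ℤ] Module.Dual ℤ H)
    (hsymm : ∀ x y : H, lam x y = lam y x)
    (hinj : Function.Injective lam)
    (hfin : Finite (Module.Dual ℤ H ⧸ LinearMap.range lam)) :
    ∃ b : (Module.Dual ℤ H ⧸ LinearMap.range lam) →
        (Module.Dual ℤ H ⧸ LinearMap.range lam) → AddCircle (1 : ℚ),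
      (∀ (φ ψ : Module.Dual ℤ H) (n : ℕ) (x : H), 0 < n → lam x = (n : ℤ) • φ →
        b (Submodule.Quotient.mk φ) (Submodule.Quotient.mk ψ) =
          (((ψ x : ℚ) / (n : ℚ) : ℚ) : AddCircle (1 : ℚ))) ∧
      (∀ s t, b s t = b t s) ∧
      (∀ s t u, b (s + t) u = b s u + b t u) ∧
      (∀ s t, (∀ u, b u s = b u t) → s = t) ∧
      (∀ φ : (Module.Dual ℤ H ⧸ LinearMap.range lam) →+ AddCircle (1 : ℚ),
        ∃ s, ∀ u, φ u = b u s) := by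
  classical
  -- abbreviations
  set D := Module.Dual ℤ H with hDdef
  -- every dual element has a positive multiple in the range
  have hex : ∀ φ : D, ∃ p : ℕ × H, 0 < p.1 ∧ lam p.2 = (p.1 : ℤ) • φ := by
    intro φ
    have hfo : IsOfFinAddOrder (Submodule.Quotient.mk φ :
        D ⧸ LinearMap.range lam) := isOfFinAddOrder_of_finite _
    set n := addOrderOf (Submodule.Quotient.mk φ : D ⧸ LinearMap.range lam) with hn
    have hnpos : 0 < n := hfo.addOrderOf_pos
    have h0 : ((n : ℤ) • φ) ∈ LinearMap.range lam := by
      rw [← Submodule.Quotient.mk_eq_zero, Submodule.Quotient.mk_smul]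
      rw [natCast_zsmul]
      exact addOrderOf_nsmul_eq_zero _
    obtain ⟨x, hx⟩ := h0
    exact ⟨⟨n, x⟩, hnpos, hx⟩
  obtain ⟨c, hc⟩ := Classical.axiomOfChoice hex
  set N : D → ℕ := fun φ => (c φ).1 with hNdef
  set X : D → H := fun φ => (c φ).2 with hXdef
  have hNpos : ∀ φ, 0 < N φ := fun φ => (hc φ).1
  have hNQ : ∀ φ, (N φ : ℚ) ≠ 0 := fun φ => by
    exact_mod_cast (hNpos φ).ne'
  have hX : ∀ φ, lam (X φ) = (N φ : ℤ) • φ := fun φ => (hc φ).2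
  set B : D → D → ℚ := fun φ ψ => (ψ (X φ) : ℚ) / (N φ : ℚ) with hBdef
  have happ : ∀ (m : ℤ) (χ : D) (v : H), ((m : ℤ) • χ) v = m * χ v := by
    intro m χ v
    rfl
  -- key computation rule
  have hB : ∀ (φ ψ : D) (n : ℕ) (x : H), 0 < n → lam x = (n : ℤ) • φ →
      B φ ψ = (ψ x : ℚ) / (n : ℚ) := by
    intro φ ψ n x hn hx
    have h2 : (n : ℤ) • X φ = (N φ : ℤ) • x := by
      apply hinj
      calc lam ((n:ℤ) • X φ) = (n:ℤ) • lam (X φ) := map_zsmul lam _ _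
        _ = (N φ:ℤ) • ((n:ℤ) • φ) := by rw [hX, smul_comm]
        _ = (N φ:ℤ) • lam x := by rw [hx]
        _ = lam ((N φ:ℤ) • x) := (map_zsmul lam _ _).symm
    have h3 : (n : ℤ) * ψ (X φ) = (N φ : ℤ) * ψ x := by
      have h4 := congrArg ψ h2
      rw [map_zsmul ψ, map_zsmul ψ] at h4
      simpa [smul_eq_mul] using h4
    have hn' : (n : ℚ) ≠ 0 := by exact_mod_cast hn.ne'
    have h3' : ψ (X φ) * (n : ℤ) = ψ x * (N φ : ℤ) := by
      rw [mul_comm, mul_comm (ψ x)]; exact h3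
    rw [hBdef]
    show (ψ (X φ) : ℚ) / (N φ : ℚ) = (ψ x : ℚ) / (n : ℚ)
    rw [div_eq_div_iff (hNQ φ) hn']
    exact_mod_cast h3'
  -- symmetry
  have hBsymm : ∀ φ ψ, B φ ψ = B ψ φ := by
    intro φ ψ
    have h1 : ψ (X φ) * (N ψ : ℤ) = φ (X ψ) * (N φ : ℤ) := by
      have e1 : lam (X ψ) (X φ) = (N ψ : ℤ) * ψ (X φ) := by
        rw [hX]; exact happ _ _ _
      have e2 : lam (X φ) (X ψ) = (N φ : ℤ) * φ (X ψ) := by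
        rw [hX]; exact happ _ _ _
      have := hsymm (X ψ) (X φ)
      rw [e1, e2] at this
      linarith
    rw [hBdef]
    show (ψ (X φ) : ℚ) / (N φ : ℚ) = (φ (X ψ) : ℚ) / (N ψ : ℚ)
    rw [div_eq_div_iff (hNQ φ) (hNQ ψ)]
    exact_mod_cast h1
  -- additivity in the first variable
  have hBadd1 : ∀ φ φ' ψ, B (φ + φ') ψ = B φ ψ + B φ' ψ := by
    intro φ φ' ψ
    have hx : lam ((N φ' : ℤ) • X φ + (N φ : ℤ) • X φ') =
        ((N φ * N φ' : ℕ) : ℤ) • (φ + φ') := by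
      rw [map_add, map_zsmul lam, map_zsmul lam, hX, hX, smul_smul, smul_smul, smul_add]
      push_cast
      rw [mul_comm (N φ' : ℤ) (N φ : ℤ)]
    have key := hB (φ + φ') ψ (N φ * N φ') _ (Nat.mul_pos (hNpos φ) (hNpos φ')) hx
    rw [key, hBdef]
    show (ψ ((N φ' : ℤ) • X φ + (N φ : ℤ) • X φ') : ℚ) / ((N φ * N φ' : ℕ) : ℚ) =
      (ψ (X φ) : ℚ) / (N φ : ℚ) + (ψ (X φ') : ℚ) / (N φ' : ℚ)
    rw [map_add, map_zsmul ψ, map_zsmul ψ]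
    have h1 := hNQ φ
    have h2 := hNQ φ'
    push_cast
    field_simp
    simp only [smul_eq_mul, zsmul_eq_mul, Int.cast_id]; push_cast; ring
  -- additivity in the second variable (exact, on representatives)
  have hBadd2 : ∀ φ ψ ψ', B φ (ψ + ψ') = B φ ψ + B φ ψ' := by
    intro φ ψ ψ'
    rw [hBdef]
    show ((ψ + ψ') (X φ) : ℚ) / (N φ : ℚ) = _
    rw [LinearMap.add_apply]
    push_cast
    rw [add_div]
  have hBsub2 : ∀ φ ψ ψ', B φ (ψ - ψ') = B φ ψ - B φ ψ' := by
    intro φ ψ ψ'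
    rw [hBdef]
    show ((ψ - ψ') (X φ) : ℚ) / (N φ : ℚ) = _
    rw [LinearMap.sub_apply]
    push_cast
    rw [sub_div]
  -- value on range elements is integral
  have hBint2 : ∀ (φ : D) (z : H), B φ (lam z) = ((φ z : ℤ) : ℚ) := by
    intro φ z
    have e : lam z (X φ) = (N φ : ℤ) * φ z := by
      rw [← hsymm, hX]; exact happ _ _ _
    rw [hBdef]
    show ((lam z) (X φ) : ℚ) / (N φ : ℚ) = ((φ z : ℤ) : ℚ)
    rw [e]
    push_cast
    rw [mul_comm, mul_div_assoc, div_self (hNQ φ), mul_one]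
  -- coset invariance up to integers
  have hBcoset : ∀ φ φ' ψ ψ' : D, φ' - φ ∈ LinearMap.range lam →
      ψ' - ψ ∈ LinearMap.range lam → ∃ m : ℤ, B φ' ψ' - B φ ψ = m := by
    intro φ φ' ψ ψ' ⟨y, hy⟩ ⟨z, hz⟩
    refine ⟨(ψ' y) + (φ z), ?_⟩
    have e1 : B φ' ψ' = B (φ' - φ) ψ' + B φ ψ' := by
      have := hBadd1 (φ' - φ) φ ψ'
      rw [sub_add_cancel] at this
      exact this
    have e2 : B (φ' - φ) ψ' = ((ψ' y : ℤ) : ℚ) := by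
      rw [← hy, hBsymm, hBint2]
    have e3 : B φ ψ' - B φ ψ = B φ (ψ' - ψ) := (hBsub2 φ ψ' ψ).symm
    have e4 : B φ (ψ' - ψ) = ((φ z : ℤ) : ℚ) := by rw [← hz, hBint2]
    push_cast
    rw [e1, e2]
    have : B φ ψ' - B φ ψ = ((φ z : ℤ) : ℚ) := by rw [e3, e4]
    push_cast at this
    linarith
  -- the AddCircle facts
  have hcoeint : ∀ m : ℤ, ((m : ℚ) : AddCircle (1 : ℚ)) = 0 := by
    intro m
    rw [AddCircle.coe_eq_zero_iff]
    exact ⟨m, by simp⟩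
  have hcoeeq : ∀ q q' : ℚ, (∃ m : ℤ, q - q' = m) →
      ((q : AddCircle (1 : ℚ)) = (q' : AddCircle (1 : ℚ))) := by
    rintro q q' ⟨m, hm⟩
    have : q = q' + (m : ℚ) := by linarith
    rw [this]
    show ((q' + (m:ℚ) : ℚ) : AddCircle (1:ℚ)) = _
    rw [show ((q' + (m:ℚ) : ℚ) : AddCircle (1:ℚ)) = (q' : AddCircle (1:ℚ)) + ((m:ℚ) : AddCircle (1:ℚ)) from rfl, hcoeint]
    simp
  have hcoeeq' : ∀ q q' : ℚ, ((q : AddCircle (1 : ℚ)) = (q' : AddCircle (1 : ℚ))) →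
      ∃ m : ℤ, q - q' = m := by
    intro q q' h
    rw [← sub_eq_zero, ← AddCircle.coe_sub, AddCircle.coe_eq_zero_iff] at h
    obtain ⟨m, hm⟩ := h
    exact ⟨m, by simpa using hm.symm⟩
  -- the form on the quotient
  set Q := D ⧸ LinearMap.range lam with hQdef
  have hout : ∀ s : Q, Submodule.Quotient.mk s.out = s := fun s => Quotient.out_eq s
  have houtmem : ∀ φ : D, ((Submodule.Quotient.mk φ : Q).out - φ) ∈ LinearMap.range lam := by
    intro φ
    rw [← Submodule.Quotient.eq]
    exact hout _
  set b : Q → Q → AddCircle (1 : ℚ) :=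
    fun s t => ((B s.out t.out : ℚ) : AddCircle (1 : ℚ)) with hbdef
  have hmk : ∀ φ ψ : D, b (Submodule.Quotient.mk φ) (Submodule.Quotient.mk ψ) =
      ((B φ ψ : ℚ) : AddCircle (1 : ℚ)) := by
    intro φ ψ
    apply hcoeeq
    exact hBcoset φ _ ψ _ (houtmem φ) (houtmem ψ)
  have hsurj : Function.Surjective (Submodule.Quotient.mk : D → Q) :=
    Submodule.Quotient.mk_surjective _
  refine ⟨b, ?_, ?_, ?_, ?_, ?_⟩
  · -- spec
    intro φ ψ n x hn hx
    rw [hmk, hB φ ψ n x hn hx]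
  · -- symmetry
    intro s t
    obtain ⟨φ, rfl⟩ := hsurj s
    obtain ⟨ψ, rfl⟩ := hsurj t
    rw [hmk, hmk, hBsymm]
  · -- additivity
    intro s t u
    obtain ⟨φ, rfl⟩ := hsurj s
    obtain ⟨φ', rfl⟩ := hsurj t
    obtain ⟨ψ, rfl⟩ := hsurj u
    rw [← Submodule.Quotient.mk_add, hmk, hmk, hmk, hBadd1]
    rfl
  · -- injectivity / nondegeneracy
    intro s t hst
    obtain ⟨ψ, rfl⟩ := hsurj s
    obtain ⟨ψ', rfl⟩ := hsurj t
    set δ := ψ - ψ' with hδ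
    have hdvd : ∀ φ : D, (N δ : ℤ) ∣ φ (X δ) := by
      intro φ
      have h := hst (Submodule.Quotient.mk φ)
      rw [hmk, hmk] at h
      obtain ⟨m, hm⟩ := hcoeeq' _ _ h
      rw [← hBsub2] at hm
      rw [hBsymm] at hm
      -- B δ φ = φ (X δ) / N δ
      have : (φ (X δ) : ℚ) / (N δ : ℚ) = m := by
        rw [hBdef] at hm; exact hm
      have hcast : φ (X δ) = m * (N δ : ℤ) := by
        exact_mod_cast (div_eq_iff (hNQ δ)).mp this
      exact ⟨m, by rw [hcast, mul_comm]⟩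
    -- divisibility of the element X δ
    set bas := Module.Free.chooseBasis ℤ H with hbas
    have hdvd' : ∀ i, (N δ : ℤ) ∣ bas.repr (X δ) i := by
      intro i; exact hdvd (bas.coord i)
    set y : H := bas.repr.symm
      ((bas.repr (X δ)).mapRange (fun r => r / (N δ : ℤ)) (by simp)) with hy
    have hny : (N δ : ℤ) • y = X δ := by
      apply bas.repr.injective
      have e1 := map_zsmul (bas.repr : H ≃ₗ[ℤ] _) ((N δ : ℤ)) y
      rw [e1, hy, LinearEquiv.apply_symm_apply]
      ext i
      have e2 := map_zsmul (Finsupp.applyAddHom (M := ℤ) i) ((N δ : ℤ))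
        ((bas.repr (X δ)).mapRange (fun r => r / (N δ : ℤ)) (by simp))
      rw [Finsupp.applyAddHom_apply, Finsupp.applyAddHom_apply] at e2
      rw [e2, Finsupp.mapRange_apply, smul_eq_mul, Int.mul_ediv_cancel' (hdvd' i)]
    have hld : lam y = δ := by
      have h1 : (N δ : ℤ) • lam y = (N δ : ℤ) • δ := by
        rw [← map_zsmul lam, hny, hX]
      have h2 : (N δ : ℤ) • (lam y - δ) = 0 := by
        rw [smul_sub, h1, sub_self]
      by_contra hne
      have : lam y - δ ≠ 0 := sub_ne_zero.mpr hne
      have := smul_eq_zero.mp h2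
      rcases this with h | h
      · exact absurd h (by exact_mod_cast (hNpos δ).ne')
      · exact absurd h ‹lam y - δ ≠ 0›
    rw [Submodule.Quotient.eq]
    exact ⟨y, hld⟩
  · -- surjectivity onto the character group
    intro χ
    set bas' := Module.Free.chooseBasis ℤ D with hbas'
    have hqex : ∀ i, ∃ qq : ℚ, ((qq : ℚ) : AddCircle (1:ℚ)) =
        χ (Submodule.Quotient.mk (bas' i)) := by
      intro i
      obtain ⟨qq, hqq⟩ := Quotient.exists_rep (χ (Submodule.Quotient.mk (bas' i)))
      exact ⟨qq, hqq⟩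
    choose q hq using hqex
    set f : D →ₗ[ℤ] ℚ := bas'.constr ℤ q with hfdef
    set coeQ : ℚ →+ AddCircle (1:ℚ) :=
      QuotientAddGroup.mk' (AddSubgroup.zmultiples (1:ℚ)) with hcoeQ
    have hcoeQapp : ∀ r : ℚ, coeQ r = ((r : ℚ) : AddCircle (1:ℚ)) := fun r => rfl
    set L1 : D →ₗ[ℤ] AddCircle (1:ℚ) := coeQ.toIntLinearMap.comp f with hL1
    set L2 : D →ₗ[ℤ] AddCircle (1:ℚ) :=
      χ.toIntLinearMap.comp (LinearMap.range lam).mkQ with hL2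
    have hL12 : L1 = L2 := by
      apply bas'.ext
      intro i
      show coeQ (f (bas' i)) = χ (Submodule.Quotient.mk (bas' i))
      rw [hfdef, Basis.constr_basis, hcoeQapp, hq]
    have hfχ : ∀ φ : D, ((f φ : ℚ) : AddCircle (1:ℚ)) = χ (Submodule.Quotient.mk φ) := by
      intro φ
      exact LinearMap.congr_fun hL12 φ
    have hgint : ∀ x : H, ∃ m : ℤ, f (lam x) = (m : ℚ) := by
      intro x
      have h0 : ((f (lam x) : ℚ) : AddCircle (1:ℚ)) = 0 := by
        rw [hfχ]
        have hz : (Submodule.Quotient.mk (lam x) : Q) = 0 :=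
          (Submodule.Quotient.mk_eq_zero _).mpr ⟨x, rfl⟩
        rw [hz, map_zero]
      rw [AddCircle.coe_eq_zero_iff] at h0
      obtain ⟨m, hm⟩ := h0
      exact ⟨m, by simpa using hm.symm⟩
    choose g hg using hgint
    have gadd : ∀ x y : H, g (x + y) = g x + g y := by
      intro x y
      have h1 : ((g (x + y) : ℤ) : ℚ) = ((g x + g y : ℤ) : ℚ) := by
        push_cast
        rw [← hg, ← hg, ← hg, map_add, map_add]
      exact_mod_cast h1
    have gzsmul : ∀ (c : ℤ) (x : H), g (c • x) = c • g x := by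
      intro c x
      have h1 : ((g (c • x) : ℤ) : ℚ) = (c : ℚ) * ((g x : ℤ) : ℚ) := by
        rw [← hg, ← hg, map_zsmul lam c x, map_zsmul f c (lam x), zsmul_eq_mul]
      have h2 : ((g (c • x) : ℤ) : ℚ) = ((c * g x : ℤ) : ℚ) := by
        rw [h1]; push_cast; ring
      have h3 : g (c • x) = c * g x := by exact_mod_cast h2
      rw [h3, zsmul_eq_mul, Int.cast_id]
    have hGex : ∃ G : D, ∀ v : H, G v = g v := by
      refine ⟨LinearMap.mk (AddHom.mk g gadd) ?_, fun v => rfl⟩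
      intro c x
      dsimp only
      letI : Unique (Module ℤ H) := AddCommGroup.uniqueIntModule
      have hMod : (‹Module ℤ H› : Module ℤ H) = AddCommGroup.toIntModule H :=
        Subsingleton.elim _ _
      rw [hMod]
      simp only [RingHom.id_apply]
      exact gzsmul c x
    obtain ⟨G, hGapp⟩ := hGex
    refine ⟨Submodule.Quotient.mk G, ?_⟩
    intro u
    obtain ⟨φ, rfl⟩ := hsurj u
    rw [hmk]
    have hBG : B φ G = f φ := by
      rw [hBdef]
      show (G (X φ) : ℚ) / (N φ : ℚ) = f φ
      have e1 : (G (X φ) : ℚ) = f (lam (X φ)) := by rw [hGapp, ← hg]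
      have e2 : f (lam (X φ)) = (N φ : ℤ) • f φ := by
        rw [hX, map_zsmul f]
      have e3 : ((N φ : ℤ) • f φ : ℚ) = (N φ : ℚ) * f φ := by
        rw [zsmul_eq_mul]; push_cast; ring
      rw [e1, e2, e3, mul_comm, mul_div_assoc, div_self (hNQ φ), mul_one]
    rw [hBG, hfχ]
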